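/- Let (Ω, μ) be a probability space, H a real inner product space (finite-dimensional or a separable Hilbert space), w* ∈ H, C ≥ 0, T ≥ 1, and α ∈ (0,1]. For t = 1,…,T let p_t, q_t, b_t : Ω → H be strongly measurable with ‖p_t(ω)‖ ≤ C, ‖q_t(ω)‖ ≤ C, ‖b_t(ω)‖ ≤ C for all ω, and let ξ̄_t ∈ ℝ. Define w_1(ω) = 0 and w_{t+1}(ω) = w_t(ω) + b_t(ω) − q_t(ω), assume ⟪w_t(ω), q_t(ω)⟫ ≥ ⟪w_t(ω), b_t(ω)⟫ for all ω and all t, and assume the expected α-informative feedback condition: E[⟪w*, b_t⟫] ≥ E[⟪w*, q_t⟫] + α·E[⟪w*, p_t⟫ − ⟪w*, q_t⟫] − ξ̄_t for all t = 1,…,T. Then the expected average regret satisfies (1/T) · Σ_{t=1}^T E[⟪w*, p_t⟫ − ⟪w*, q_t⟫] ≤ 2·C·‖w*‖/(α·√T) + (1/(α·T)) · Σ_{t=1}^T ξ̄_t. -/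

import Mathlib

open scoped InnerProductSpace BigOperators
open MeasureTheory

/-- Expected average regret bound for the trajectory preference perceptron
under expected α-informative feedback. -/
theorem tpp_expected_average_regret_bound
    {Ω : Type*} [MeasurableSpace Ω] (μ : Measure Ω) [IsProbabilityMeasure μ]
    {H : Type*} [NormedAddCommGroup H] [InnerProductSpace ℝ H]
    [CompleteSpace H] [SecondCountableTopology H]
    (wstar : H) (C : ℝ) (hC : 0 ≤ C) (T : ℕ) (hT : 1 ≤ T)
    (α : ℝ) (hα0 : 0 < α) (hα1 : α ≤ 1)
    (p q b : ℕ → Ω → H) (ξ : ℕ → ℝ)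
    (hpm : ∀ t, 1 ≤ t → t ≤ T → StronglyMeasurable (p t))
    (hqm : ∀ t, 1 ≤ t → t ≤ T → StronglyMeasurable (q t))
    (hbm : ∀ t, 1 ≤ t → t ≤ T → StronglyMeasurable (b t))
    (hp : ∀ t, 1 ≤ t → t ≤ T → ∀ ω, ‖p t ω‖ ≤ C)
    (hq : ∀ t, 1 ≤ t → t ≤ T → ∀ ω, ‖q t ω‖ ≤ C)
    (hb : ∀ t, 1 ≤ t → t ≤ T → ∀ ω, ‖b t ω‖ ≤ C)
    (w : ℕ → Ω → H) (hw1 : ∀ ω, w 1 ω = 0)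
    (hwupd : ∀ t, 1 ≤ t → t ≤ T → ∀ ω, w (t + 1) ω = w t ω + b t ω - q t ω)
    (hpred : ∀ t, 1 ≤ t → t ≤ T → ∀ ω, ⟪w t ω, b t ω⟫_ℝ ≤ ⟪w t ω, q t ω⟫_ℝ)
    (hfeed : ∀ t, 1 ≤ t → t ≤ T →
      (∫ ω, ⟪wstar, q t ω⟫_ℝ ∂μ) +
        α * (∫ ω, (⟪wstar, p t ω⟫_ℝ - ⟪wstar, q t ω⟫_ℝ) ∂μ) - ξ t ≤
        ∫ ω, ⟪wstar, b t ω⟫_ℝ ∂μ) :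
    (1 / (T : ℝ)) *
        ∑ t ∈ Finset.Icc 1 T, (∫ ω, (⟪wstar, p t ω⟫_ℝ - ⟪wstar, q t ω⟫_ℝ) ∂μ) ≤
      2 * C * ‖wstar‖ / (α * Real.sqrt T) +
        (1 / (α * T)) * ∑ t ∈ Finset.Icc 1 T, ξ t := by
  have hTpos : (0 : ℝ) < (T : ℝ) := by exact_mod_cast Nat.lt_of_lt_of_le Nat.zero_lt_one hT
  have hsqrt : (0 : ℝ) < Real.sqrt T := Real.sqrt_pos.mpr hTpos
  -- integrability helper
  have hint : ∀ (f : Ω → H), StronglyMeasurable f → (∀ ω, ‖f ω‖ ≤ C) →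
      Integrable (fun ω => ⟪wstar, f ω⟫_ℝ) μ := by
    intro f hf hfb
    refine Integrable.mono' (integrable_const (‖wstar‖ * C))
      (stronglyMeasurable_const.inner hf).aestronglyMeasurable ?_
    refine Filter.Eventually.of_forall fun ω => ?_
    calc ‖⟪wstar, f ω⟫_ℝ‖ = |⟪wstar, f ω⟫_ℝ| := rfl
      _ ≤ ‖wstar‖ * ‖f ω‖ := abs_real_inner_le_norm _ _
      _ ≤ ‖wstar‖ * C := by
          exact mul_le_mul_of_nonneg_left (hfb ω) (norm_nonneg _)
  -- pathwise norm bound on w (T+1)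
  have hnormsq : ∀ ω, ∀ s, s ≤ T → ‖w (s + 1) ω‖ ^ 2 ≤ 4 * C ^ 2 * s := by
    intro ω s
    induction s with
    | zero => intro _; simp [hw1 ω]
    | succ n ih =>
      intro hn
      have hn' : n ≤ T := Nat.le_of_succ_le hn
      have h1 : 1 ≤ n + 1 := Nat.succ_le_succ (Nat.zero_le n)
      have hupd := hwupd (n + 1) h1 hn ω
      have hcross : ⟪w (n+1) ω, b (n+1) ω - q (n+1) ω⟫_ℝ ≤ 0 := by
        rw [inner_sub_right]
        linarith [hpred (n+1) h1 hn ω]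
      have hdiff : ‖b (n+1) ω - q (n+1) ω‖ ≤ 2 * C := by
        calc ‖b (n+1) ω - q (n+1) ω‖ ≤ ‖b (n+1) ω‖ + ‖q (n+1) ω‖ := norm_sub_le _ _
          _ ≤ 2 * C := by linarith [hb (n+1) h1 hn ω, hq (n+1) h1 hn ω]
      have hdiffsq : ‖b (n+1) ω - q (n+1) ω‖ ^ 2 ≤ 4 * C ^ 2 := by
        have := sq_le_sq' (by linarith [norm_nonneg (b (n+1) ω - q (n+1) ω)]) hdiff
        nlinarith
      have hexp : ‖w (n+1+1) ω‖ ^ 2 =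
          ‖w (n+1) ω‖ ^ 2 + 2 * ⟪w (n+1) ω, b (n+1) ω - q (n+1) ω⟫_ℝ
            + ‖b (n+1) ω - q (n+1) ω‖ ^ 2 := by
        have : w (n+1+1) ω = w (n+1) ω + (b (n+1) ω - q (n+1) ω) := by
          rw [hupd]; abel
        rw [this, @norm_add_sq_real]
      have := ih hn'
      rw [hexp]
      push_cast
      nlinarith
  have hnormbd : ∀ ω, ‖w (T + 1) ω‖ ≤ 2 * C * Real.sqrt T := by
    intro ω
    have h := hnormsq ω T le_rfl
    have h2 : (2 * C * Real.sqrt T) ^ 2 = 4 * C ^ 2 * T := by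
      rw [mul_pow, mul_pow, Real.sq_sqrt hTpos.le]; ring
    have hpos : 0 ≤ 2 * C * Real.sqrt T := by positivity
    nlinarith [norm_nonneg (w (T+1) ω)]
  -- w (T+1) as a telescoping sum
  have hsum : ∀ ω, ∀ s, s ≤ T →
      w (s + 1) ω = ∑ t ∈ Finset.Icc 1 s, (b t ω - q t ω) := by
    intro ω s
    induction s with
    | zero => intro _; simp [hw1 ω]
    | succ n ih =>
      intro hn
      have hn' : n ≤ T := Nat.le_of_succ_le hn
      rw [hwupd (n+1) (Nat.succ_le_succ (Nat.zero_le n)) hn ω, ih hn',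
        Finset.sum_Icc_succ_top (Nat.succ_le_succ (Nat.zero_le n))]
      abel
  -- pointwise bound on the sum of inner products
  have hptwise : ∀ ω, ∑ t ∈ Finset.Icc 1 T, (⟪wstar, b t ω⟫_ℝ - ⟪wstar, q t ω⟫_ℝ)
      ≤ 2 * C * Real.sqrt T * ‖wstar‖ := by
    intro ω
    have : ∑ t ∈ Finset.Icc 1 T, (⟪wstar, b t ω⟫_ℝ - ⟪wstar, q t ω⟫_ℝ)
        = ⟪wstar, w (T+1) ω⟫_ℝ := by
      rw [hsum ω T le_rfl, inner_sum]
      exact Finset.sum_congr rfl fun t _ => (inner_sub_right _ _ _).symm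
    rw [this]
    calc ⟪wstar, w (T+1) ω⟫_ℝ ≤ ‖wstar‖ * ‖w (T+1) ω‖ := real_inner_le_norm _ _
      _ ≤ ‖wstar‖ * (2 * C * Real.sqrt T) :=
          mul_le_mul_of_nonneg_left (hnormbd ω) (norm_nonneg _)
      _ = 2 * C * Real.sqrt T * ‖wstar‖ := by ring
  -- integrabilities on Icc
  have hIb : ∀ t ∈ Finset.Icc 1 T, Integrable (fun ω => ⟪wstar, b t ω⟫_ℝ) μ := by
    intro t ht
    rw [Finset.mem_Icc] at ht
    exact hint _ (hbm t ht.1 ht.2) (hb t ht.1 ht.2)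
  have hIq : ∀ t ∈ Finset.Icc 1 T, Integrable (fun ω => ⟪wstar, q t ω⟫_ℝ) μ := by
    intro t ht
    rw [Finset.mem_Icc] at ht
    exact hint _ (hqm t ht.1 ht.2) (hq t ht.1 ht.2)
  -- sum of expectations bound
  have hsumexp : ∑ t ∈ Finset.Icc 1 T,
      ((∫ ω, ⟪wstar, b t ω⟫_ℝ ∂μ) - ∫ ω, ⟪wstar, q t ω⟫_ℝ ∂μ)
      ≤ 2 * C * Real.sqrt T * ‖wstar‖ := by
    have heq : ∑ t ∈ Finset.Icc 1 T,
        ((∫ ω, ⟪wstar, b t ω⟫_ℝ ∂μ) - ∫ ω, ⟪wstar, q t ω⟫_ℝ ∂μ)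
        = ∫ ω, ∑ t ∈ Finset.Icc 1 T, (⟪wstar, b t ω⟫_ℝ - ⟪wstar, q t ω⟫_ℝ) ∂μ := by
      have hIdiff : ∀ t ∈ Finset.Icc 1 T,
          Integrable (fun ω => ⟪wstar, b t ω⟫_ℝ - ⟪wstar, q t ω⟫_ℝ) μ :=
        fun t ht => (hIb t ht).sub (hIq t ht)
      rw [integral_finset_sum _ hIdiff]
      exact Finset.sum_congr rfl fun t ht => (integral_sub (hIb t ht) (hIq t ht)).symm
    rw [heq]
    calc ∫ ω, ∑ t ∈ Finset.Icc 1 T, (⟪wstar, b t ω⟫_ℝ - ⟪wstar, q t ω⟫_ℝ) ∂μ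
        ≤ ∫ _ω, 2 * C * Real.sqrt T * ‖wstar‖ ∂μ := by
          refine integral_mono (integrable_finset_sum _
            (fun t ht => (hIb t ht).sub (hIq t ht))) (integrable_const _) hptwise
      _ = 2 * C * Real.sqrt T * ‖wstar‖ := by
          simp [measure_univ]
  -- per-round feedback gives bound on regret
  set S := ∑ t ∈ Finset.Icc 1 T, (∫ ω, (⟪wstar, p t ω⟫_ℝ - ⟪wstar, q t ω⟫_ℝ) ∂μ) with hS
  have hαS : α * S ≤ 2 * C * Real.sqrt T * ‖wstar‖ + ∑ t ∈ Finset.Icc 1 T, ξ t := by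
    have h1 : α * S = ∑ t ∈ Finset.Icc 1 T,
        α * (∫ ω, (⟪wstar, p t ω⟫_ℝ - ⟪wstar, q t ω⟫_ℝ) ∂μ) := by
      rw [hS, Finset.mul_sum]
    rw [h1]
    have h2 : ∑ t ∈ Finset.Icc 1 T,
        α * (∫ ω, (⟪wstar, p t ω⟫_ℝ - ⟪wstar, q t ω⟫_ℝ) ∂μ)
        ≤ ∑ t ∈ Finset.Icc 1 T,
          (((∫ ω, ⟪wstar, b t ω⟫_ℝ ∂μ) - ∫ ω, ⟪wstar, q t ω⟫_ℝ ∂μ) + ξ t) := by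
      refine Finset.sum_le_sum fun t ht => ?_
      rw [Finset.mem_Icc] at ht
      linarith [hfeed t ht.1 ht.2]
    rw [Finset.sum_add_distrib] at h2
    linarith [hsumexp]
  -- final arithmetic
  have hSle : S ≤ (2 * C * Real.sqrt T * ‖wstar‖ + ∑ t ∈ Finset.Icc 1 T, ξ t) / α :=
    (le_div_iff₀' hα0).mpr hαS
  have key : (1 / (T : ℝ)) * S ≤
      (1 / (T : ℝ)) * ((2 * C * Real.sqrt T * ‖wstar‖ + ∑ t ∈ Finset.Icc 1 T, ξ t) / α) :=
    mul_le_mul_of_nonneg_left hSle (by positivity)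
  refine key.trans (le_of_eq ?_)
  have hTsq : Real.sqrt T * Real.sqrt T = (T : ℝ) := Real.mul_self_sqrt hTpos.le
  field_simp
  linear_combination (2 * C * ‖wstar‖) * hTsq
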